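/- Let N = (L_1, M_1), …, (L_r, M_r) (r ≥ 1) be a special convenient integral Newton-polygon datum satisfying conditions (R1)–(R3). Then the integers β_0 := 1 + ht(N) and β_k := L^{(k−1)}_1/M^{(k−1)}_1 for k = 1, …, r form a Puiseux characteristic sequence: β_0 < β_1 < ⋯ < β_r, gcd(β_0, …, β_r) = 1, and gcd(β_0, …, β_k) < gcd(β_0, …, β_{k−1}) for every 1 ≤ k ≤ r. -/

import Mathlib

/-- A canonical Newton-polygon datum with `r` edges: a pair of `1`-indexed sequences
`(L, M)` of positive rationals with strictly increasing inclinations `L k / M k`. -/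
def IsCanonicalNP (p : (ℕ → ℚ) × (ℕ → ℚ)) (r : ℕ) : Prop :=
  (∀ k, 1 ≤ k → k ≤ r → 0 < p.1 k ∧ 0 < p.2 k) ∧
  ∀ k, 1 ≤ k → k < r → p.1 k / p.2 k < p.1 (k + 1) / p.2 (k + 1)

/-- An integral datum: all the entries are positive integers. -/
def IsIntegralNP (p : (ℕ → ℚ) × (ℕ → ℚ)) (r : ℕ) : Prop :=
  ∀ k, 1 ≤ k → k ≤ r →
    (∃ a : ℕ, 0 < a ∧ p.1 k = a) ∧ (∃ b : ℕ, 0 < b ∧ p.2 k = b)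

/-- A special datum: all the inclinations are greater than `1`. -/
def IsSpecialNP (p : (ℕ → ℚ) × (ℕ → ℚ)) (r : ℕ) : Prop :=
  ∀ k, 1 ≤ k → k ≤ r → 1 < p.1 k / p.2 k

/-- The height `ht(N) = M_1 + ⋯ + M_r` of a Newton-polygon datum with `r` edges. -/
def htNP (p : (ℕ → ℚ) × (ℕ → ℚ)) (r : ℕ) : ℚ := ∑ k ∈ Finset.Icc 1 r, p.2 k

/-- The reduction `R(N)`, with `L'_i = L_{i+1} − (L_1/(1+M_1))·M_{i+1}` and
`M'_i = M_{i+1}/(1+M_1)`; its iterates give `R^i(N)` via `redNP^[i] p`. -/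
def redNP (p : (ℕ → ℚ) × (ℕ → ℚ)) : (ℕ → ℚ) × (ℕ → ℚ) :=
  (fun i => p.1 (i + 1) - (p.1 1 / (1 + p.2 1)) * p.2 (i + 1),
   fun i => p.2 (i + 1) / (1 + p.2 1))

/-- Condition (R1): `1 + ht(N) < L_1/M_1`. -/
def CondR1 (p : (ℕ → ℚ) × (ℕ → ℚ)) (r : ℕ) : Prop :=
  1 + htNP p r < p.1 1 / p.2 1

/-- Condition (R2): for `0 ≤ i ≤ r−1`, all entries of `R^i(N)` are integers and
`L^{(i)}_1/M^{(i)}_1` is a (natural) integer. -/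
def CondR2 (p : (ℕ → ℚ) × (ℕ → ℚ)) (r : ℕ) : Prop :=
  ∀ i, i ≤ r - 1 →
    (∀ k, 1 ≤ k → k ≤ r - i →
      (∃ a : ℤ, (redNP^[i] p).1 k = a) ∧ (∃ b : ℤ, (redNP^[i] p).2 k = b)) ∧
    ∃ a : ℕ, (redNP^[i] p).1 1 / (redNP^[i] p).2 1 = a

/-- Condition (R3): for `0 ≤ i ≤ r−1`,
`(1 + M^{(i)}_1)·gcd(L^{(i)}_1/M^{(i)}_1, 1 + ht(R^i(N))) = 1 + ht(R^i(N))`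
(the gcd of the two integer-valued rationals being taken via their numerators). -/
def CondR3 (p : (ℕ → ℚ) × (ℕ → ℚ)) (r : ℕ) : Prop :=
  ∀ i, i ≤ r - 1 →
    (1 + (redNP^[i] p).2 1) *
      (Nat.gcd ((redNP^[i] p).1 1 / (redNP^[i] p).2 1).num.natAbs
        (1 + htNP (redNP^[i] p) (r - i)).num.natAbs : ℚ)
    = 1 + htNP (redNP^[i] p) (r - i)

/-- An increasing sequence `δ_0 < δ_1 < ⋯ < δ_h` of positive integers is a Puiseux
characteristic sequence if `gcd(δ_0, …, δ_h) = 1` and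
`gcd(δ_0, …, δ_k) < gcd(δ_0, …, δ_{k−1})` for all `1 ≤ k ≤ h`. -/
def IsPuiseuxChar (δ : ℕ → ℕ) (h : ℕ) : Prop :=
  (∀ k, k ≤ h → 0 < δ k) ∧ (∀ k, k < h → δ k < δ (k + 1)) ∧
  (Finset.range (h + 1)).gcd δ = 1 ∧
  ∀ k, 1 ≤ k → k ≤ h → (Finset.range (k + 1)).gcd δ < (Finset.range k).gcd δ

lemma ht_red' (q : (ℕ → ℚ) × (ℕ → ℚ)) (hM : (1 : ℚ) + q.2 1 ≠ 0) (s : ℕ) :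
    (1 + htNP (redNP q) s) * (1 + q.2 1) = 1 + htNP q (s + 1) := by
  induction s with
  | zero =>
      simp [htNP, redNP]
  | succ n ih =>
      have h1 : htNP (redNP q) (n + 1) = htNP (redNP q) n + (redNP q).2 (n + 1) :=
        Finset.sum_Icc_succ_top (by omega) _
      have h2 : htNP q (n + 2) = htNP q (n + 1) + q.2 (n + 2) :=
        Finset.sum_Icc_succ_top (by omega) _
      have h3 : (redNP q).2 (n + 1) = q.2 (n + 2) / (1 + q.2 1) := rfl
      rw [h1, h2, h3]
      calc (1 + (htNP (redNP q) n + q.2 (n + 2) / (1 + q.2 1))) * (1 + q.2 1)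
          = (1 + htNP (redNP q) n) * (1 + q.2 1) + (q.2 (n + 2) / (1 + q.2 1)) * (1 + q.2 1) := by
            ring
        _ = (1 + htNP q (n + 1)) + q.2 (n + 2) := by rw [ih, div_mul_cancel₀ _ hM]
        _ = 1 + (htNP q (n + 1) + q.2 (n + 2)) := by ring

lemma incl_red (q : (ℕ → ℚ) × (ℕ → ℚ)) (hM : (1 : ℚ) + q.2 1 ≠ 0) (k : ℕ)
    (hMk : q.2 (k + 1) ≠ 0) :
    (redNP q).1 k / (redNP q).2 k = (1 + q.2 1) * (q.1 (k + 1) / q.2 (k + 1)) - q.1 1 := by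
  show (q.1 (k + 1) - q.1 1 / (1 + q.2 1) * q.2 (k + 1)) / (q.2 (k + 1) / (1 + q.2 1)) = _
  field_simp

lemma incl_one_lt (q : (ℕ → ℚ) × (ℕ → ℚ)) (s : ℕ) (hc : IsCanonicalNP q s) :
    ∀ b, 2 ≤ b → b ≤ s → q.1 1 / q.2 1 < q.1 b / q.2 b := by
  intro b
  induction b with
  | zero => omega
  | succ n ih =>
      intro hb2 hbs
      rcases Nat.lt_or_ge n 2 with h | h
      · have hn : n = 1 := by omega
        subst hn
        exact hc.2 1 le_rfl (by omega)
      · exact (ih h (by omega)).trans (hc.2 n (by omega) (by omega))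

lemma red_props (q : (ℕ → ℚ) × (ℕ → ℚ)) (s : ℕ) (hs : 2 ≤ s)
    (hc : IsCanonicalNP q s) (hsp : IsSpecialNP q s) :
    IsCanonicalNP (redNP q) (s - 1) ∧ IsSpecialNP (redNP q) (s - 1) ∧
      q.1 1 / q.2 1 < (redNP q).1 1 / (redNP q).2 1 := by
  have hM1 : 0 < q.2 1 := (hc.1 1 le_rfl (by omega)).2
  have hL1 : 0 < q.1 1 := (hc.1 1 le_rfl (by omega)).1
  have hM : (0 : ℚ) < 1 + q.2 1 := by linarith
  have hMne : (1 : ℚ) + q.2 1 ≠ 0 := ne_of_gt hM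
  have base : (1 + q.2 1) * (q.1 1 / q.2 1) - q.1 1 = q.1 1 / q.2 1 := by
    field_simp
    ring
  have key : ∀ k, 1 ≤ k → k ≤ s - 1 →
      q.1 1 / q.2 1 < (redNP q).1 k / (redNP q).2 k := by
    intro k h1 h2
    have hMk : q.2 (k + 1) ≠ 0 := ne_of_gt (hc.1 (k + 1) (by omega) (by omega)).2
    rw [incl_red q hMne k hMk]
    have hlt : q.1 1 / q.2 1 < q.1 (k + 1) / q.2 (k + 1) :=
      incl_one_lt q s hc (k + 1) (by omega) (by omega)
    nlinarith [mul_lt_mul_of_pos_left hlt hM]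
  have hM'pos : ∀ k, 1 ≤ k → k ≤ s - 1 → 0 < (redNP q).2 k := by
    intro k h1 h2
    exact div_pos (hc.1 (k + 1) (by omega) (by omega)).2 hM
  have hsp1 : 1 < q.1 1 / q.2 1 := hsp 1 le_rfl (by omega)
  have hinclpos : ∀ k, 1 ≤ k → k ≤ s - 1 → 0 < (redNP q).1 k / (redNP q).2 k := by
    intro k h1 h2
    have := key k h1 h2
    linarith
  have hL'pos : ∀ k, 1 ≤ k → k ≤ s - 1 → 0 < (redNP q).1 k := by
    intro k h1 h2
    have hrw : (redNP q).1 k = ((redNP q).1 k / (redNP q).2 k) * (redNP q).2 k :=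
      (div_mul_cancel₀ _ (ne_of_gt (hM'pos k h1 h2))).symm
    rw [hrw]
    exact mul_pos (hinclpos k h1 h2) (hM'pos k h1 h2)
  refine ⟨⟨fun k h1 h2 => ⟨hL'pos k h1 h2, hM'pos k h1 h2⟩, ?_⟩, ?_, ?_⟩
  · intro k h1 h2
    have hMk : q.2 (k + 1) ≠ 0 := ne_of_gt (hc.1 (k + 1) (by omega) (by omega)).2
    have hMk' : q.2 (k + 2) ≠ 0 := ne_of_gt (hc.1 (k + 2) (by omega) (by omega)).2
    rw [incl_red q hMne k hMk, incl_red q hMne (k + 1) hMk']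
    have hlt := hc.2 (k + 1) (by omega) (by omega)
    nlinarith [mul_lt_mul_of_pos_left hlt hM]
  · intro k h1 h2
    exact lt_trans hsp1 (key k h1 h2)
  · exact key 1 le_rfl (by omega)

lemma cast_num_toNat {x : ℚ} {n : ℕ} (h : x = n) :
    ((x.num.toNat : ℕ) : ℚ) = x ∧ x.num.toNat = x.num.natAbs := by
  subst h
  constructor <;> simp

/-- For a special convenient integral Newton-polygon datum `N` with
`r ≥ 1` edges satisfying conditions (R1)–(R3), the integers `β_0 := 1 + ht(N)` and
`β_k := L^{(k−1)}_1/M^{(k−1)}_1` (`k = 1, …, r`) form a Puiseux characteristic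
sequence. -/
theorem reduction_gives_puiseux_char
    (p : (ℕ → ℚ) × (ℕ → ℚ)) (r : ℕ) (hr : 1 ≤ r)
    (hc : IsCanonicalNP p r) (hi : IsIntegralNP p r) (hs : IsSpecialNP p r)
    (h1 : CondR1 p r) (h2 : CondR2 p r) (h3 : CondR3 p r) :
    ∃ β : ℕ → ℕ,
      (β 0 : ℚ) = 1 + htNP p r ∧
      (∀ k, 1 ≤ k → k ≤ r →
        (β k : ℚ) = (redNP^[k - 1] p).1 1 / (redNP^[k - 1] p).2 1) ∧
      IsPuiseuxChar β r := by
  classical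
  have hiter : ∀ i : ℕ, redNP^[i + 1] p = redNP (redNP^[i] p) := fun i =>
    Function.iterate_succ_apply' redNP i p
  -- Step 1: iterates are canonical and special
  have hC : ∀ i, i < r →
      IsCanonicalNP (redNP^[i] p) (r - i) ∧ IsSpecialNP (redNP^[i] p) (r - i) := by
    intro i
    induction i with
    | zero => intro _; simpa using ⟨hc, hs⟩
    | succ n ih =>
        intro hn
        have h' := ih (by omega)
        have h2s : 2 ≤ r - n := by omega
        have hrp := red_props _ _ h2s h'.1 h'.2
        rw [hiter n]
        have e : r - (n + 1) = (r - n) - 1 := by omega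
        rw [e]
        exact ⟨hrp.1, hrp.2.1⟩
  obtain ⟨b, hbdef⟩ : ∃ b : ℕ → ℚ, ∀ i, b i = 1 + htNP (redNP^[i] p) (r - i) :=
    ⟨_, fun i => rfl⟩
  have hM1pos : ∀ i, i < r → 0 < (redNP^[i] p).2 1 := fun i hi' =>
    ((hC i hi').1.1 1 le_rfl (by omega)).2
  have hbrec : ∀ i, i < r → b (i + 1) * (1 + (redNP^[i] p).2 1) = b i := by
    intro i hi'
    have hMne : (1 : ℚ) + (redNP^[i] p).2 1 ≠ 0 := by
      have := hM1pos i hi'; positivity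
    have key := ht_red' (redNP^[i] p) hMne (r - i - 1)
    have e2 : r - i - 1 + 1 = r - i := by omega
    rw [e2] at key
    rw [hbdef (i + 1), hbdef i, hiter i]
    have e1 : r - (i + 1) = r - i - 1 := by omega
    rw [e1]
    exact key
  have hbpos : ∀ i, i ≤ r → 0 < b i := by
    intro i hi'
    have hht : 0 ≤ htNP (redNP^[i] p) (r - i) := by
      rcases hi'.lt_or_eq with h | h
      · refine Finset.sum_nonneg fun k hk => ?_
        rw [Finset.mem_Icc] at hk
        exact le_of_lt ((hC i h).1.1 k hk.1 hk.2).2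
      · subst h
        simp [htNP]
    rw [hbdef i]
    linarith
  -- b i are natural numbers
  have hq2nat : ∀ i, i < r → ∃ a : ℕ, (redNP^[i] p).1 1 / (redNP^[i] p).2 1 = a :=
    fun i hi' => (h2 i (by omega)).2
  have hb0nat : ∃ n : ℕ, b 0 = n := by
    have hmem : ∀ k ∈ Finset.Icc 1 r, ∃ n : ℕ, p.2 k = (n : ℚ) := by
      intro k hk
      rw [Finset.mem_Icc] at hk
      obtain ⟨n, _, hn⟩ := (hi k hk.1 hk.2).2
      exact ⟨n, hn⟩
    choose f hf using hmem
    refine ⟨1 + ∑ k ∈ (Finset.Icc 1 r).attach, f k k.2, ?_⟩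
    rw [hbdef 0]
    simp only [Function.iterate_zero, id_eq, Nat.sub_zero, htNP]
    rw [← Finset.sum_attach (Finset.Icc 1 r) p.2]
    push_cast
    congr 1
    exact Finset.sum_congr rfl fun k _ => hf k.1 k.2
  have hbnat : ∀ i, i ≤ r → ∃ n : ℕ, b i = n := by
    intro i hi'
    cases i with
    | zero => exact hb0nat
    | succ n =>
        have hn : n < r := by omega
        have h3' := h3 n (by omega)
        rw [← hbdef n] at h3'
        have hrec := hbrec n hn
        have hMne : (1 : ℚ) + (redNP^[n] p).2 1 ≠ 0 := by
          have := hM1pos n hn; positivity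
        refine ⟨Nat.gcd ((redNP^[n] p).1 1 / (redNP^[n] p).2 1).num.natAbs
          (b n).num.natAbs, ?_⟩
        have heq : b (n + 1) * (1 + (redNP^[n] p).2 1)
            = (Nat.gcd ((redNP^[n] p).1 1 / (redNP^[n] p).2 1).num.natAbs
              (b n).num.natAbs : ℚ)
              * (1 + (redNP^[n] p).2 1) := by
          rw [hrec]
          linear_combination -h3'
        exact mul_right_cancel₀ hMne heq
  have hBcast : ∀ i, i ≤ r → ((b i).num.natAbs : ℚ) = b i := by
    intro i hi'
    obtain ⟨n, hn⟩ := hbnat i hi'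
    rw [hn]
    simp
  -- the candidate β
  set β : ℕ → ℕ := fun k =>
    (if k = 0 then 1 + htNP p r else (redNP^[k - 1] p).1 1 / (redNP^[k - 1] p).2 1).num.toNat
    with hβdef
  have hb0e : b 0 = 1 + htNP p r := by rw [hbdef 0]; simp
  have hβ0e : β 0 = (1 + htNP p r).num.toNat := rfl
  have hβke : ∀ m : ℕ,
      β (m + 1) = ((redNP^[m] p).1 1 / (redNP^[m] p).2 1).num.toNat := fun m => rfl
  have hn0' : ∃ n : ℕ, 1 + htNP p r = (n : ℚ) := by
    obtain ⟨n, hn⟩ := hb0nat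
    exact ⟨n, by rw [← hb0e]; exact hn⟩
  have hβ0 : (β 0 : ℚ) = b 0 := by
    obtain ⟨n, hn⟩ := hn0'
    rw [hβ0e, hb0e]
    exact (cast_num_toNat hn).1
  have hβk : ∀ k, 1 ≤ k → k ≤ r →
      (β k : ℚ) = (redNP^[k - 1] p).1 1 / (redNP^[k - 1] p).2 1 := by
    intro k hk1 hkr
    obtain ⟨m, rfl⟩ : ∃ m, k = m + 1 := ⟨k - 1, by omega⟩
    obtain ⟨n, hn⟩ := hq2nat m (by omega)
    rw [hβke m, Nat.add_sub_cancel]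
    exact (cast_num_toNat hn).1
  have hG : ∀ i, i ≤ r → (Finset.range (i + 1)).gcd β = (b i).num.natAbs := by
    intro i
    induction i with
    | zero =>
        intro _
        obtain ⟨n, hn⟩ := hn0'
        rw [Finset.range_one, Finset.gcd_singleton, normalize_eq, hβ0e,
          (cast_num_toNat hn).2, hb0e]
    | succ n ih =>
        intro hn'
        have hnr : n < r := by omega
        rw [Finset.range_add_one, Finset.gcd_insert, ih (by omega)]
        have h3' := h3 n (by omega)
        rw [← hbdef n] at h3'
        have hMne : (1 : ℚ) + (redNP^[n] p).2 1 ≠ 0 := by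
          have := hM1pos n hnr; positivity
        -- the gcd equals b (n+1)
        have hgcd : ((Nat.gcd ((redNP^[n] p).1 1 / (redNP^[n] p).2 1).num.natAbs
            (b n).num.natAbs : ℕ) : ℚ) = b (n + 1) := by
          have hrec := hbrec n hnr
          have heq : (Nat.gcd ((redNP^[n] p).1 1 / (redNP^[n] p).2 1).num.natAbs
              (b n).num.natAbs : ℚ) * (1 + (redNP^[n] p).2 1)
              = b (n + 1) * (1 + (redNP^[n] p).2 1) := by
            rw [hrec]
            linear_combination h3'
          exact mul_right_cancel₀ hMne heq
        have hβval : β (n + 1) = ((redNP^[n] p).1 1 / (redNP^[n] p).2 1).num.natAbs := by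
          obtain ⟨a, ha⟩ := hq2nat n hnr
          rw [hβke n]
          exact (cast_num_toNat ha).2
        have : GCDMonoid.gcd (β (n + 1)) (b n).num.natAbs
            = Nat.gcd (β (n + 1)) (b n).num.natAbs := rfl
        rw [this, hβval]
        have hcast : ((b (n + 1)).num.natAbs : ℚ) = b (n + 1) := hBcast (n + 1) hn'
        have : ((Nat.gcd ((redNP^[n] p).1 1 / (redNP^[n] p).2 1).num.natAbs
            (b n).num.natAbs : ℕ) : ℚ) = ((b (n + 1)).num.natAbs : ℚ) := by
          rw [hgcd, hcast]
        exact_mod_cast this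
  refine ⟨β, by rw [hβ0, hb0e], hβk, ?_, ?_, ?_, ?_⟩
  -- positivity
  · intro k hk
    rcases Nat.eq_zero_or_pos k with h | h
    · subst h
      have := hbpos 0 (by omega)
      have : (0 : ℚ) < (β 0 : ℚ) := by rw [hβ0]; exact this
      exact_mod_cast this
    · have hsp1 : 1 < (redNP^[k - 1] p).1 1 / (redNP^[k - 1] p).2 1 :=
        (hC (k - 1) (by omega)).2 1 le_rfl (by omega)
      have : (1 : ℚ) < (β k : ℚ) := by rw [hβk k h hk]; exact hsp1
      have : (1 : ℕ) < β k := by exact_mod_cast this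
      omega
  -- strictly increasing
  · intro k hk
    rcases Nat.eq_zero_or_pos k with h | h
    · subst h
      have hlt : (β 0 : ℚ) < (β 1 : ℚ) := by
        rw [hβ0, hβk 1 le_rfl hr, hb0e]
        simpa [CondR1] using h1
      exact_mod_cast hlt
    · obtain ⟨m, rfl⟩ : ∃ m, k = m + 1 := ⟨k - 1, by omega⟩
      have h2s : 2 ≤ r - m := by omega
      have hrp := red_props _ _ h2s (hC m (by omega)).1 (hC m (by omega)).2
      have hlt : (β (m + 1) : ℚ) < (β (m + 2) : ℚ) := by
        rw [hβk (m + 1) (by omega) (by omega), hβk (m + 2) (by omega) (by omega)]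
        simp only [Nat.add_sub_cancel]
        have e : m + 2 - 1 = m + 1 := by omega
        rw [e, hiter m]
        exact hrp.2.2
      exact_mod_cast hlt
  -- gcd chain
  · have hbr : b r = 1 := by
      rw [hbdef r]
      simp [htNP]
    rw [hG r le_rfl, hbr]
    rfl
  -- strict decrease of gcds
  · intro k hk1 hkr
    have e : k - 1 + 1 = k := by omega
    have hGk := hG k hkr
    have hGk1 := hG (k - 1) (by omega)
    rw [e] at hGk1
    rw [hGk, hGk1]
    have hnr : k - 1 < r := by omega
    have hrec := hbrec (k - 1) hnr
    rw [e] at hrec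
    have hM := hM1pos (k - 1) hnr
    have hbk := hbpos k hkr
    have hblt : b k < b (k - 1) := by nlinarith
    have c1 : ((b k).num.natAbs : ℚ) = b k := hBcast k hkr
    have c2 : ((b (k - 1)).num.natAbs : ℚ) = b (k - 1) := hBcast (k - 1) (by omega)
    have : ((b k).num.natAbs : ℚ) < ((b (k - 1)).num.natAbs : ℚ) := by
      rw [c1, c2]; exact hblt
    exact_mod_cast this
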